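/- Let C be a ternary self-dual code of length n and let x ∈ F_3^n be a vector such that wt(x) ≡ 0 (mod 3) and x ∉ C. Then the code N(C,x) = ⟨C ∩ ⟨x⟩^⊥, x⟩, i.e., the F_3-span of x together with the intersection of C with the dual code of the span of x, is a self-dual code of length n. -/

import Mathlib

open Matrix

/-- The field with 3 elements. -/
abbrev F3 : Type := ZMod 3

/-- The `n × n` negacirculant matrix over `F3` with first row `r`:
its `(i,j)` entry is `r ((j-i) mod n)` if `i ≤ j` and `2 * r ((j-i) mod n)` if `i > j`. -/
def negacirc {n : ℕ} (r : Fin n → F3) : Matrix (Fin n) (Fin n) F3 :=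
  fun i j => if (i : ℕ) ≤ (j : ℕ) then r (j - i) else 2 * r (j - i)

/-- A matrix is negacirculant if it is the negacirculant matrix of some first row. -/
def IsNegacirculant {n : ℕ} (M : Matrix (Fin n) (Fin n) F3) : Prop :=
  ∃ r : Fin n → F3, M = negacirc r

/-- The generator matrix `(I | M)` where `M` is the 3×3 block matrix with blocks `M i j`. -/
def genMat {n : ℕ} (M : Fin 3 → Fin 3 → Matrix (Fin n) (Fin n) F3) :
    Matrix (Fin 3 × Fin n) ((Fin 3 × Fin n) ⊕ (Fin 3 × Fin n)) F3 :=
  Matrix.fromCols 1 (fun p q => M p.1 q.1 p.2 q.2)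

/-- The ternary `[6n, 3n]` code `C(M₁₁, …, M₃₃)` generated by the rows of `(I | M)`. -/
def codeC {n : ℕ} (M : Fin 3 → Fin 3 → Matrix (Fin n) (Fin n) F3) :
    Submodule F3 (((Fin 3 × Fin n) ⊕ (Fin 3 × Fin n)) → F3) :=
  Submodule.span F3 (Set.range (genMat M))

/-- The code `C(r₁, r₂, r₃)` where `r i j` is the first row of the negacirculant block `M i j`. -/
def codeCr {n : ℕ} (r : Fin 3 → Fin 3 → Fin n → F3) :
    Submodule F3 (((Fin 3 × Fin n) ⊕ (Fin 3 × Fin n)) → F3) :=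
  codeC (fun i j => negacirc (r i j))

/-- A monomial matrix: exactly one nonzero entry in each row and in each column. -/
def IsMonomial {ι : Type*} [Fintype ι] (P : Matrix ι ι F3) : Prop :=
  (∀ i, ∃! j, P i j ≠ 0) ∧ (∀ j, ∃! i, P i j ≠ 0)

/-- Two ternary codes are equivalent if one is the image of the other under a monomial matrix. -/
def CodeEquiv {ι : Type*} [Fintype ι] (C C' : Submodule F3 (ι → F3)) : Prop :=
  ∃ P : Matrix ι ι F3, IsMonomial P ∧
    (C' : Set (ι → F3)) = (fun x => Matrix.vecMul x P) '' (C : Set (ι → F3))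

/-- The dual code of `C` (as a set): all vectors orthogonal to every codeword of `C`. -/
def dualCode {ι : Type*} [Fintype ι] (C : Submodule F3 (ι → F3)) : Set (ι → F3) :=
  {x | ∀ y ∈ C, ∑ i, x i * y i = 0}

/-- A ternary code is self-dual if it coincides with its dual code. -/
def IsSelfDual {ι : Type*} [Fintype ι] (C : Submodule F3 (ι → F3)) : Prop :=
  (C : Set (ι → F3)) = dualCode C

/-- The weight of a vector: the number of its nonzero coordinates. -/
def wt {ι : Type*} [Fintype ι] (x : ι → F3) : ℕ :=
  (Finset.univ.filter fun i => x i ≠ 0).card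

/-- `C` has minimum weight `d`: some nonzero codeword has weight `d`
and every nonzero codeword has weight at least `d`. -/
def MinWeightIs {ι : Type*} [Fintype ι] (C : Submodule F3 (ι → F3)) (d : ℕ) : Prop :=
  (∃ c ∈ C, c ≠ 0 ∧ wt c = d) ∧ ∀ c ∈ C, c ≠ 0 → d ≤ wt c

/-- `N(C, x) = ⟨C ∩ ⟨x⟩^⊥, x⟩`: the span of `x` together with `C ∩ ⟨x⟩^⊥`. -/
def NCx {ι : Type*} [Fintype ι] (C : Submodule F3 (ι → F3)) (x : ι → F3) :
    Submodule F3 (ι → F3) :=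
  Submodule.span F3 (((C : Set (ι → F3)) ∩ dualCode (Submodule.span F3 {x})) ∪ {x})

def dotB (ι : Type*) [Fintype ι] : LinearMap.BilinForm F3 (ι → F3) :=
  LinearMap.mk₂ F3 (fun x y => ∑ i, x i * y i)
    (fun x x' y => by simp [add_mul, Finset.sum_add_distrib])
    (fun c x y => by simp [Finset.mul_sum, mul_assoc])
    (fun x y y' => by simp [mul_add, Finset.sum_add_distrib])
    (fun c x y => by simp [Finset.mul_sum, mul_left_comm])

lemma dotB_apply {ι : Type*} [Fintype ι] (x y : ι → F3) :
    dotB ι x y = ∑ i, x i * y i := rfl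

lemma dotB_comm {ι : Type*} [Fintype ι] (x y : ι → F3) :
    dotB ι x y = dotB ι y x := by
  simp [dotB_apply, mul_comm]

lemma dotB_refl {ι : Type*} [Fintype ι] : (dotB ι).IsRefl := by
  intro x y h; rwa [dotB_comm]

lemma dotB_nondeg {ι : Type*} [Fintype ι] [DecidableEq ι] : (dotB ι).Nondegenerate := by
  have hl : LinearMap.SeparatingLeft (dotB ι) := by
    intro x hx
    funext i
    have := hx (Pi.single i 1)
    simpa [dotB_apply, Pi.single_apply, mul_ite, Finset.sum_ite_eq'] using this
  exact ⟨hl, fun y hy => hl y (fun x => by rw [dotB_comm]; exact hy x)⟩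

lemma dualCode_eq {ι : Type*} [Fintype ι] (C : Submodule F3 (ι → F3)) :
    dualCode C = ((dotB ι).orthogonal C : Set (ι → F3)) := by
  ext z
  constructor
  · intro h y hy
    have := h y hy
    rw [dotB_comm]
    exact this
  · intro h y hy
    have := h y hy
    rw [dotB_comm] at this
    exact this

theorem stmt5 (n : ℕ) (C : Submodule F3 (Fin n → F3)) (hC : IsSelfDual C)
    (x : Fin n → F3) (hwt : wt x % 3 = 0) (hx : x ∉ C) :
    IsSelfDual (NCx C x) := by
  classical
  set B := dotB (Fin n) with hB
  -- C equals its orthogonal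
  have hCo : C = B.orthogonal C := by
    apply SetLike.coe_injective
    rw [← dualCode_eq]
    exact hC
  -- pairwise orthogonality within C
  have hCC : ∀ a ∈ C, ∀ b ∈ C, B a b = 0 := by
    intro a ha b hb
    have : a ∈ B.orthogonal C := hCo ▸ ha
    exact dotB_refl b a (this b hb)
  -- B x x = 0
  have hxx : B x x = 0 := by
    have hsq : ∀ a : F3, a * a = if a = 0 then 0 else 1 := by decide
    have : B x x = ((Finset.univ.filter fun i => ¬ x i = 0).card : F3) := by
      rw [dotB_apply]
      rw [Finset.sum_congr rfl (fun i _ => hsq (x i))]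
      rw [Finset.sum_ite, Finset.sum_const_zero, zero_add, Finset.sum_const,
        nsmul_eq_mul, mul_one]
    rw [this]
    have : (Finset.univ.filter fun i => ¬ x i = 0).card = wt x := rfl
    rw [this]
    exact (ZMod.natCast_eq_zero_iff _ _).2 (Nat.dvd_of_mod_eq_zero hwt)
  have hx0 : x ≠ 0 := fun h => hx (h ▸ C.zero_mem)
  -- the subspace D
  set D : Submodule F3 (Fin n → F3) := C ⊓ B.orthogonal (Submodule.span F3 {x}) with hDdef
  -- NCx as a sup
  have hN : NCx C x = D ⊔ Submodule.span F3 {x} := by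
    unfold NCx
    rw [Submodule.span_union]
    congr 1
    rw [dualCode_eq, ← Submodule.coe_inf, Submodule.span_eq]
  -- membership in orthogonal of span x
  have hmem_orth_span : ∀ y, y ∈ B.orthogonal (Submodule.span F3 {x}) ↔ B x y = 0 := by
    intro y
    constructor
    · intro h; exact h x (Submodule.mem_span_singleton_self x)
    · intro h m hm
      obtain ⟨c, rfl⟩ := Submodule.mem_span_singleton.1 hm
      show B (c • x) y = 0
      rw [_root_.map_smul, LinearMap.smul_apply, h, smul_zero]
  -- orthogonality of x with D
  have hDx : ∀ d ∈ D, B x d = 0 := fun d hd => (hmem_orth_span d).1 hd.2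
  -- self-orthogonality: N ≤ orthogonal N
  have hNle : NCx C x ≤ B.orthogonal (NCx C x) := by
    rw [hN]
    have key : ∀ m ∈ D ⊔ Submodule.span F3 {x}, ∀ z, z ∈ D ∨ z = x → B m z = 0 := by
      intro m hm z hz
      obtain ⟨d, hd, w, hw, rfl⟩ := Submodule.mem_sup.1 hm
      obtain ⟨c, rfl⟩ := Submodule.mem_span_singleton.1 hw
      have h1 : B d z = 0 := by
        rcases hz with hz | hz
        · exact hCC d hd.1 z hz.1
        · rw [hz]; exact dotB_refl x d (hDx d hd)
      have h2 : B x z = 0 := by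
        rcases hz with hz | hz
        · exact hDx z hz
        · rw [hz]; exact hxx
      rw [_root_.map_add, LinearMap.add_apply, h1, _root_.map_smul, LinearMap.smul_apply, h2,
        smul_zero, add_zero]
    apply sup_le
    · intro d hd m hm
      exact key m hm d (Or.inl hd)
    · rw [Submodule.span_le, Set.singleton_subset_iff]
      intro m hm
      exact key m hm x (Or.inr rfl)
  -- dimension counting
  have hdimV : Module.finrank F3 (Fin n → F3) = n := by
    simp [Module.finrank_fin_fun]
  have hCle : Module.finrank F3 C ≤ n := le_trans (Submodule.finrank_le C) hdimV.le
  have h2C : 2 * Module.finrank F3 C = n := by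
    have := LinearMap.BilinForm.finrank_orthogonal (B := B) dotB_nondeg C
    rw [← hCo, hdimV] at this
    omega
  -- finrank D = finrank C - 1
  have hfx : ∃ c ∈ C, B x c ≠ 0 := by
    by_contra h
    push_neg at h
    apply hx
    have : x ∈ dualCode C := by
      intro y hy
      have := h y hy
      rwa [dotB_apply] at this
    rw [← hC] at this
    exact this
  have hDrank : Module.finrank F3 D + 1 = Module.finrank F3 C := by
    set f : C →ₗ[F3] F3 := (B x).domRestrict C with hf
    have hker : LinearMap.ker f = Submodule.comap C.subtype (LinearMap.ker (B x)) :=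
      LinearMap.ker_domRestrict C (B x)
    have hmap : (LinearMap.ker f).map C.subtype = D := by
      rw [hker, Submodule.map_comap_subtype]
      rw [hDdef]
      congr 1
      ext y
      rw [hmem_orth_span, LinearMap.mem_ker]
    have hrange : LinearMap.range f = ⊤ := by
      obtain ⟨c, hc, hc0⟩ := hfx
      have h1 : (1 : F3) ∈ LinearMap.range f := by
        have : f ⟨c, hc⟩ = B x c := rfl
        refine ⟨(B x c)⁻¹ • ⟨c, hc⟩, ?_⟩
        rw [_root_.map_smul, this, smul_eq_mul, inv_mul_cancel₀ hc0]
      rw [eq_top_iff]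
      intro a _
      have : a • (1 : F3) ∈ LinearMap.range f := Submodule.smul_mem _ a h1
      simpa using this
    have := LinearMap.finrank_range_add_finrank_ker f
    rw [hrange] at this
    have h1 : Module.finrank F3 (⊤ : Submodule F3 F3) = 1 := by
      simp [Module.finrank_self]
    rw [h1] at this
    have h2 : Module.finrank F3 (LinearMap.ker f) = Module.finrank F3 D := by
      rw [← hmap, Submodule.finrank_map_subtype_eq]
    omega
  -- D ⊓ span x = ⊥
  have hDinf : D ⊓ Submodule.span F3 {x} = ⊥ := by
    rw [eq_bot_iff]
    rintro y ⟨hyD, hyx⟩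
    obtain ⟨c, rfl⟩ := Submodule.mem_span_singleton.1 hyx
    rcases eq_or_ne c 0 with rfl | hc
    · simp
    · exfalso
      apply hx
      have : c • x ∈ C := hyD.1
      have := C.smul_mem c⁻¹ this
      rwa [smul_smul, inv_mul_cancel₀ hc, one_smul] at this
  have hNrank : Module.finrank F3 (NCx C x) = Module.finrank F3 C := by
    rw [hN]
    have := Submodule.finrank_sup_add_finrank_inf_eq D (Submodule.span F3 {x})
    rw [hDinf, finrank_bot, finrank_span_singleton hx0] at this
    omega
  -- conclude
  have horth_rank : Module.finrank F3 (B.orthogonal (NCx C x)) = Module.finrank F3 (NCx C x) := by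
    rw [LinearMap.BilinForm.finrank_orthogonal (B := B) dotB_nondeg, hdimV, hNrank]
    omega
  have : NCx C x = B.orthogonal (NCx C x) :=
    Submodule.eq_of_le_of_finrank_le hNle horth_rank.le
  rw [IsSelfDual, dualCode_eq]
  exact congrArg _ this
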